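/- Let Θ be a real symmetric positive definite p×p matrix and Δ a real symmetric p×p matrix such that Θ + vΔ is positive definite for every v ∈ [0, 1]. Then log det(Θ + Δ) − log det Θ − tr(Θ⁻¹Δ) = −∫₀¹ (1 − v)·tr( ((Θ + vΔ)⁻¹ Δ)² ) dv, and the integrand (1 − v)·tr(((Θ + vΔ)⁻¹Δ)²) is nonnegative for every v ∈ [0, 1]. -/

import Mathlib

open scoped Matrix

open Matrix Polynomial

section Aux

lemma stmt14_logdet_deriv {p : ℕ} (Θ Δ : Matrix (Fin p) (Fin p) ℝ) {v₀ : ℝ}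
    (h : (Θ + v₀ • Δ).det ≠ 0) :
    HasDerivAt (fun v : ℝ => Real.log (Θ + v • Δ).det)
      (((Θ + v₀ • Δ)⁻¹ * Δ).trace) v₀ := by
  set A := Θ + v₀ • Δ with hA
  set M := A⁻¹ * Δ with hM
  set E := (det (1 + (X : ℝ[X]) • M.map C)).divX.divX with hE
  have hinv : A * A⁻¹ = 1 := mul_nonsing_inv A (isUnit_iff_ne_zero.mpr h)
  have key : ∀ v : ℝ, (Θ + v • Δ).det
      = A.det * (1 + M.trace * (v - v₀) + E.eval (v - v₀) * (v - v₀) ^ 2) := by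
    intro v
    have h1 : Θ + v • Δ = A * (1 + (v - v₀) • M) := by
      rw [mul_add, mul_one, mul_smul_comm, hM, ← mul_assoc, hinv, one_mul, hA]
      module
    rw [h1, det_mul, det_one_add_smul]
  have hq : HasDerivAt
      (fun v : ℝ => A.det * (1 + M.trace * (v - v₀) + E.eval (v - v₀) * (v - v₀) ^ 2))
      (A.det * M.trace) v₀ := by
    have hshift : HasDerivAt (fun v : ℝ => v - v₀) 1 v₀ := (hasDerivAt_id v₀).sub_const v₀
    have h2 : HasDerivAt (fun t : ℝ => 1 + M.trace * t + E.eval t * t ^ 2) M.trace 0 := by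
      have hpoly : HasDerivAt (fun t : ℝ => E.eval t) (E.derivative.eval 0) 0 :=
        E.hasDerivAt 0
      have hsq : HasDerivAt (fun t : ℝ => t ^ 2) 0 0 := by
        simpa using hasDerivAt_pow 2 (0 : ℝ)
      have := ((hasDerivAt_const (0:ℝ) (1:ℝ)).add
        ((hasDerivAt_id (0:ℝ)).const_mul M.trace)).add (hpoly.mul hsq)
      exact this.congr_deriv (by simp)
    have := (h2.comp_of_eq v₀ hshift (by simp)).const_mul A.det
    simpa using this
  have hfun : (fun v : ℝ => Real.log (Θ + v • Δ).det)
      = fun v : ℝ =>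
        Real.log (A.det * (1 + M.trace * (v - v₀) + E.eval (v - v₀) * (v - v₀) ^ 2)) := by
    funext v; rw [key v]
  rw [hfun]
  have hval : A.det * (1 + M.trace * (v₀ - v₀) + E.eval (v₀ - v₀) * (v₀ - v₀) ^ 2) ≠ 0 := by
    simp [h]
  have := hq.log hval
  convert this using 1
  field_simp
  simp

attribute [local instance] Matrix.linftyOpNormedRing Matrix.linftyOpNormedAlgebra

lemma stmt14_trinv_deriv {p : ℕ} (Θ Δ : Matrix (Fin p) (Fin p) ℝ) {v₀ : ℝ}
    (h : IsUnit (Θ + v₀ • Δ)) :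
    HasDerivAt (fun v : ℝ => ((Θ + v • Δ)⁻¹ * Δ).trace)
      (-((((Θ + v₀ • Δ)⁻¹ * Δ) * ((Θ + v₀ • Δ)⁻¹ * Δ)).trace)) v₀ := by
  haveI : CompleteSpace (Matrix (Fin p) (Fin p) ℝ) := FiniteDimensional.complete ℝ _
  have hS : HasDerivAt (fun v : ℝ => Θ + v • Δ) Δ v₀ := by
    have := ((hasDerivAt_id v₀).smul_const Δ).const_add Θ
    simp only [one_smul] at this
    exact this
  have hu : ((h.unit⁻¹ : (Matrix (Fin p) (Fin p) ℝ)ˣ) : Matrix (Fin p) (Fin p) ℝ)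
      = (Θ + v₀ • Δ)⁻¹ := by
    rw [Matrix.nonsing_inv_eq_ringInverse]
    conv_rhs => rw [← h.unit_spec]
    rw [Ring.inverse_unit]
  have hinv : HasDerivAt (fun v : ℝ => Ring.inverse (Θ + v • Δ))
      (-((Θ + v₀ • Δ)⁻¹ * Δ * (Θ + v₀ • Δ)⁻¹)) v₀ := by
    have := (hasFDerivAt_ringInverse (𝕜 := ℝ) h.unit).comp_hasDerivAt_of_eq v₀ hS
      h.unit_spec.symm
    simp only [hu] at this
    exact this
  have hfun : (fun v : ℝ => Ring.inverse (Θ + v • Δ)) = fun v : ℝ => (Θ + v • Δ)⁻¹ := by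
    funext v; rw [Matrix.nonsing_inv_eq_ringInverse]
  rw [hfun] at hinv
  have hmul : HasDerivAt (fun v : ℝ => (Θ + v • Δ)⁻¹ * Δ)
      (-((Θ + v₀ • Δ)⁻¹ * Δ * (Θ + v₀ • Δ)⁻¹) * Δ) v₀ := hinv.mul_const Δ
  have htr := (Matrix.traceLinearMap (Fin p) ℝ ℝ).toContinuousLinearMap.hasFDerivAt.comp_hasDerivAt
    v₀ hmul
  have h2 : HasDerivAt (fun v : ℝ => ((Θ + v • Δ)⁻¹ * Δ).trace)
      ((-((Θ + v₀ • Δ)⁻¹ * Δ * (Θ + v₀ • Δ)⁻¹) * Δ).trace) v₀ := by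
    exact htr
  convert h2 using 1
  rw [show -((Θ + v₀ • Δ)⁻¹ * Δ * (Θ + v₀ • Δ)⁻¹) * Δ
      = -((((Θ + v₀ • Δ)⁻¹ * Δ) * ((Θ + v₀ • Δ)⁻¹ * Δ))) by rw [neg_mul, mul_assoc],
    Matrix.trace_neg]

end Aux

lemma stmt14_trace_sq_nonneg {p : ℕ} {A Δ : Matrix (Fin p) (Fin p) ℝ}
    (hA : A.PosSemidef) (hΔ : Δᵀ = Δ) : 0 ≤ ((A * Δ) * (A * Δ)).trace := by
  obtain ⟨B, hBps, hBB⟩ : ∃ B : Matrix (Fin p) (Fin p) ℝ, B.PosSemidef ∧ B * B = A :=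
    open scoped MatrixOrder in ⟨CFC.sqrt A, Matrix.nonneg_iff_posSemidef.mp (CFC.sqrt_nonneg A),
      CFC.sqrt_mul_sqrt_self A (Matrix.nonneg_iff_posSemidef.mpr hA)⟩
  have hBt : Bᵀ = B := by
    have := hBps.1
    rwa [Matrix.IsHermitian, Matrix.conjTranspose_eq_transpose_of_trivial] at this
  have hMt : (B * Δ * B)ᵀ = B * Δ * B := by
    rw [Matrix.transpose_mul, Matrix.transpose_mul, hBt, hΔ, mul_assoc]
  have e2 : ((A * Δ) * (A * Δ)).trace = ((B * Δ * B)ᵀ * (B * Δ * B)).trace := by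
    rw [hMt, ← hBB]
    rw [show B * B * Δ * (B * B * Δ) = B * (B * Δ * B * (B * Δ)) by
      simp only [mul_assoc]]
    rw [Matrix.trace_mul_comm]
    simp only [mul_assoc]
  rw [e2, Matrix.trace]
  apply Finset.sum_nonneg
  intro i _
  rw [Matrix.diag_apply, Matrix.mul_apply]
  apply Finset.sum_nonneg
  intro j _
  rw [Matrix.transpose_apply]
  exact mul_self_nonneg _

/-- Second-order integral Taylor expansion of `log det`: if `Θ`
is symmetric positive definite, `Δ` symmetric, and `Θ + vΔ` is positive definite
for all `v ∈ [0, 1]`, then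
`log det(Θ + Δ) − log det Θ − tr(Θ⁻¹Δ) = −∫₀¹ (1 − v) tr(((Θ + vΔ)⁻¹Δ)²) dv`,
and the integrand is nonnegative on `[0, 1]`. -/
theorem stmt14 {p : ℕ} (Θ Δ : Matrix (Fin p) (Fin p) ℝ)
    (hΘ : Θ.PosDef) (hΔ : Δᵀ = Δ)
    (hpos : ∀ v ∈ Set.Icc (0 : ℝ) 1, (Θ + v • Δ).PosDef) :
    (Real.log (Θ + Δ).det - Real.log Θ.det - (Θ⁻¹ * Δ).trace =
      -∫ v in (0 : ℝ)..1,
        (1 - v) * ((((Θ + v • Δ)⁻¹ * Δ) * ((Θ + v • Δ)⁻¹ * Δ)).trace)) ∧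
    ∀ v ∈ Set.Icc (0 : ℝ) 1,
      0 ≤ (1 - v) * ((((Θ + v • Δ)⁻¹ * Δ) * ((Θ + v • Δ)⁻¹ * Δ)).trace) := by
  have hdet : ∀ v ∈ Set.Icc (0:ℝ) 1, (Θ + v • Δ).det ≠ 0 :=
    fun v hv => (hpos v hv).det_pos.ne'
  have hunit : ∀ v ∈ Set.Icc (0:ℝ) 1, IsUnit (Θ + v • Δ) :=
    fun v hv => (hpos v hv).isUnit
  constructor
  · set F : ℝ → ℝ := fun v =>
      Real.log (Θ + v • Δ).det + (1 - v) * ((Θ + v • Δ)⁻¹ * Δ).trace with hF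
    set F' : ℝ → ℝ := fun v =>
      -((1 - v) * ((((Θ + v • Δ)⁻¹ * Δ) * ((Θ + v • Δ)⁻¹ * Δ)).trace)) with hF'
    have hderiv : ∀ v ∈ Set.uIcc (0:ℝ) 1, HasDerivAt F (F' v) v := by
      intro v hv
      rw [Set.uIcc_of_le zero_le_one] at hv
      have h1 := stmt14_logdet_deriv Θ Δ (hdet v hv)
      have h2 := stmt14_trinv_deriv Θ Δ (hunit v hv)
      have h3 := ((hasDerivAt_const v (1:ℝ)).sub (hasDerivAt_id v)).mul h2
      have h4 := h1.add h3
      refine h4.congr_deriv ?_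
      simp only [hF', id_eq, Pi.sub_apply]
      ring
    have hcont : ContinuousOn F' (Set.uIcc (0:ℝ) 1) := by
      rw [Set.uIcc_of_le zero_le_one]
      intro v hv
      have hc1 : Continuous fun v : ℝ => Θ + v • Δ :=
        continuous_const.add (continuous_id.smul continuous_const)
      have hcinv : ContinuousAt (fun v : ℝ => (Θ + v • Δ)⁻¹) v := by
        have hri : ContinuousAt (Ring.inverse : ℝ → ℝ) (Θ + v • Δ).det := by
          rw [Ring.inverse_eq_inv']
          exact continuousAt_inv₀ (hdet v hv)
        have := ContinuousAt.comp (x := v) (continuousAt_matrix_inv (Θ + v • Δ) hri)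
          hc1.continuousAt
        exact this
      have : ContinuousAt F' v := by
        apply ContinuousAt.neg
        apply ContinuousAt.mul
        · exact (continuous_const.sub continuous_id).continuousAt
        · have hX : ContinuousAt
              (fun v : ℝ => ((Θ + v • Δ)⁻¹ * Δ) * ((Θ + v • Δ)⁻¹ * Δ)) v :=
            (hcinv.mul continuousAt_const).mul (hcinv.mul continuousAt_const)
          have htrc : Continuous (Matrix.trace : Matrix (Fin p) (Fin p) ℝ → ℝ) :=
            continuous_id.matrix_trace
          exact htrc.continuousAt.comp hX
      exact this.continuousWithinAt
    have hint : IntervalIntegrable F' MeasureTheory.volume 0 1 :=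
      hcont.intervalIntegrable
    have key := intervalIntegral.integral_eq_sub_of_hasDerivAt hderiv hint
    have hF1 : F 1 = Real.log (Θ + Δ).det := by
      simp [hF]
    have hF0 : F 0 = Real.log Θ.det + (Θ⁻¹ * Δ).trace := by
      simp [hF]
    have hneg : ∫ v in (0:ℝ)..1, F' v
        = -∫ v in (0:ℝ)..1,
            (1 - v) * ((((Θ + v • Δ)⁻¹ * Δ) * ((Θ + v • Δ)⁻¹ * Δ)).trace) := by
      simp only [hF']
      exact intervalIntegral.integral_neg
    rw [hneg, hF1, hF0] at key
    linarith [key]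
  · intro v hv
    have h1 : (0:ℝ) ≤ 1 - v := by linarith [hv.2]
    exact mul_nonneg h1 (stmt14_trace_sq_nonneg (hpos v hv).inv.posSemidef hΔ)
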